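/- Let Θ_1, Θ_2, Θ_3 be closed balls in ℝ² with centers b_i, and suppose some point u on the segment [b_1, b_2] lies in the interior of Θ_3 but outside Θ_1 and Θ_2. Then u is a global minimizer of H(x) = Σ_{i=1}^3 D(x;Θ_i), with H(u) = ‖b_1 − b_2‖ − s_1 − s_2. -/
import Mathlib

open Metric

lemma infDist_closedBall_ge {E : Type*} [NormedAddCommGroup E] [NormedSpace ℝ E]
    (x b : E) {s : ℝ} (hs : 0 ≤ s) :
    dist x b - s ≤ Metric.infDist x (Metric.closedBall b s) := by
  by_contra h
  push_neg at h
  obtain ⟨y, hy, hxy⟩ := (infDist_lt_iff (Metric.nonempty_closedBall.2 hs)).1 h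
  have : dist x b ≤ dist x y + dist y b := dist_triangle x y b
  have hyb : dist y b ≤ s := mem_closedBall.1 hy
  linarith

lemma infDist_closedBall_eq {E : Type*} [NormedAddCommGroup E] [NormedSpace ℝ E]
    (x b : E) {s : ℝ} (hs : 0 ≤ s) (hd : s < dist x b) :
    Metric.infDist x (Metric.closedBall b s) = dist x b - s := by
  have hd0 : 0 < dist x b := lt_of_le_of_lt hs hd
  refine le_antisymm ?_ (infDist_closedBall_ge x b hs)
  set d := dist x b with hdd
  set y := b + (s / d) • (x - b) with hy
  have hyb : y ∈ Metric.closedBall b s := by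
    simp only [mem_closedBall, hy, dist_eq_norm]
    have : b + (s / d) • (x - b) - b = (s / d) • (x - b) := by abel
    rw [this, norm_smul]
    have : ‖x - b‖ = d := by rw [hdd, dist_eq_norm]
    rw [this, Real.norm_eq_abs, abs_of_nonneg (by positivity)]
    rw [div_mul_cancel₀ _ hd0.ne']
  have hxy : dist x y = d - s := by
    rw [dist_eq_norm]
    have : x - y = (1 - s / d) • (x - b) := by
      rw [hy]; rw [sub_smul, one_smul]; abel
    rw [this, norm_smul, Real.norm_eq_abs]
    have h1 : ‖x - b‖ = d := by rw [hdd, dist_eq_norm]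
    rw [h1, abs_of_nonneg (by rw [sub_nonneg]; exact (div_le_one hd0).2 hd.le)]
    field_simp
  calc Metric.infDist x (Metric.closedBall b s) ≤ dist x y := infDist_le_dist_of_mem hyb
    _ = d - s := hxy

/-- A point of the segment `[b₁, b₂]` lying in the interior of `Θ₃` but outside `Θ₁` and
`Θ₂` is a global minimizer of `H`, with value `‖b₁ − b₂‖ − s₁ − s₂`. -/
theorem fermat_torricelli_segment_minimizer
    (b : Fin 3 → EuclideanSpace ℝ (Fin 2)) (s : Fin 3 → ℝ) (hs : ∀ i, 0 ≤ s i)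
    (hb : Function.Injective b)
    (H : EuclideanSpace ℝ (Fin 2) → ℝ)
    (hH : ∀ x, H x = ∑ i : Fin 3, Metric.infDist x (Metric.closedBall (b i) (s i)))
    (u : EuclideanSpace ℝ (Fin 2)) (hu : u ∈ segment ℝ (b 0) (b 1))
    (hu3 : u ∈ interior (Metric.closedBall (b 2) (s 2)))
    (hu1 : u ∉ Metric.closedBall (b 0) (s 0)) (hu2 : u ∉ Metric.closedBall (b 1) (s 1)) :
    (∀ x, H u ≤ H x) ∧ H u = ‖b 0 - b 1‖ - s 0 - s 1 := by
  have hd0 : s 0 < dist u (b 0) := by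
    simpa [mem_closedBall, not_le] using hu1
  have hd1 : s 1 < dist u (b 1) := by
    simpa [mem_closedBall, not_le] using hu2
  have h2 : Metric.infDist u (Metric.closedBall (b 2) (s 2)) = 0 :=
    infDist_zero_of_mem (interior_subset hu3)
  -- dist u b0 + dist u b1 = dist b0 b1
  have hseg : dist u (b 0) + dist u (b 1) = dist (b 0) (b 1) := by
    obtain ⟨a, t, ha, ht, hat, rfl⟩ := hu
    have e0 : a • b 0 + t • b 1 - b 0 = t • (b 1 - b 0) := by
      rw [show a = 1 - t by linarith]; module
    have e1 : a • b 0 + t • b 1 - b 1 = -(a • (b 1 - b 0)) := by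
      rw [show t = 1 - a by linarith]; module
    rw [dist_eq_norm, dist_eq_norm, dist_eq_norm, e0, e1, norm_neg, norm_smul, norm_smul,
      Real.norm_eq_abs, Real.norm_eq_abs, abs_of_nonneg ht, abs_of_nonneg ha,
      show b 0 - b 1 = -(b 1 - b 0) by abel, norm_neg, ← add_mul]
    rw [show t + a = 1 by linarith, one_mul]
  have hHu : H u = ‖b 0 - b 1‖ - s 0 - s 1 := by
    rw [hH, Fin.sum_univ_three, h2,
      infDist_closedBall_eq u (b 0) (hs 0) hd0,
      infDist_closedBall_eq u (b 1) (hs 1) hd1, ← dist_eq_norm, ← hseg]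
    ring
  refine ⟨fun x => ?_, hHu⟩
  rw [hHu, hH, Fin.sum_univ_three]
  have g0 := infDist_closedBall_ge x (b 0) (hs 0)
  have g1 := infDist_closedBall_ge x (b 1) (hs 1)
  have g2 : (0:ℝ) ≤ Metric.infDist x (Metric.closedBall (b 2) (s 2)) := infDist_nonneg
  have tri : dist (b 0) (b 1) ≤ dist x (b 0) + dist x (b 1) := dist_triangle_left _ _ _
  have : ‖b 0 - b 1‖ = dist (b 0) (b 1) := (dist_eq_norm _ _).symm
  linarith
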